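/- Let γ > 0 and let φ:[0,∞)→[0,∞) be given by φ(t) = ∫₀ᵗ φ'(s) ds where φ' is nonnegative and increasing. If φ' satisfies (aInc)_γ with constant L ≥ 1 (i.e., φ'(s)/s^γ ≤ L φ'(t)/t^γ for 0 < s < t), then φ satisfies (aInc)_{γ+1} with the same constant L. -/

import Mathlib

open Set

/-- If `φ(t) = ∫₀ᵗ φ'` with `φ'` nonnegative and increasing, and `φ'`
satisfies (aInc)_γ with constant `L ≥ 1`, then `φ` satisfies (aInc)_{γ+1} with the
same constant `L`. -/
theorem stmt1 (γ L : ℝ) (φ φ' : ℝ → ℝ)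
    (hγ : 0 < γ) (hL : 1 ≤ L)
    (hnn : ∀ s : ℝ, 0 ≤ s → 0 ≤ φ' s)
    (hmono : MonotoneOn φ' (Set.Ici 0))
    (hφ : ∀ t : ℝ, 0 ≤ t → φ t = ∫ s in (0:ℝ)..t, φ' s)
    (hainc : ∀ s t : ℝ, 0 < s → s < t → φ' s / s ^ γ ≤ L * (φ' t / t ^ γ)) :
    ∀ s t : ℝ, 0 < s → s < t → φ s / s ^ (γ + 1) ≤ L * (φ t / t ^ (γ + 1)) := by
  intro s t hs hst
  have ht : 0 < t := hs.trans hst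
  set c := t / s with hc
  have hc1 : 1 < c := (one_lt_div hs).mpr hst
  have hc0 : 0 < c := lt_trans one_pos hc1
  have hcs : c * s = t := div_mul_cancel₀ t hs.ne'
  have hcγ : (0:ℝ) < c ^ γ := Real.rpow_pos_of_pos hc0 γ
  -- integrability of φ' on [0, s]
  have hint1 : IntervalIntegrable φ' MeasureTheory.volume 0 s := by
    apply MonotoneOn.intervalIntegrable
    apply hmono.mono
    rw [Set.uIcc_of_le hs.le]
    exact fun x hx => hx.1
  -- integrability of u ↦ φ'(c*u) on [0,s]
  have hint2 : IntervalIntegrable (fun u => φ' (c * u)) MeasureTheory.volume 0 s := by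
    apply MonotoneOn.intervalIntegrable
    intro x hx y hy hxy
    rw [Set.uIcc_of_le hs.le] at hx hy
    exact hmono (mul_nonneg hc0.le hx.1) (mul_nonneg hc0.le hy.1)
      (by nlinarith [hx.1, hy.1])
  have hint3 : IntervalIntegrable (fun u => L / c ^ γ * φ' (c * u))
      MeasureTheory.volume 0 s := hint2.const_mul _
  -- pointwise bound on Ioc 0 s
  have hptwise : ∀ u ∈ Set.Ioc (0:ℝ) s, φ' u ≤ L / c ^ γ * φ' (c * u) := by
    intro u hu
    have hu0 : 0 < u := hu.1
    have huγ : (0:ℝ) < u ^ γ := Real.rpow_pos_of_pos hu0 γ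
    have h := hainc u (c * u) hu0 (by nlinarith)
    have hcu : (c * u) ^ γ = c ^ γ * u ^ γ := Real.mul_rpow hc0.le hu0.le
    rw [hcu] at h
    rw [div_le_iff₀ huγ] at h
    calc φ' u = φ' u / u ^ γ * u ^ γ := by field_simp
      _ ≤ L * (φ' (c * u) / (c ^ γ * u ^ γ)) * u ^ γ := by
          exact mul_le_mul_of_nonneg_right (by rw [div_le_iff₀ huγ] at *; linarith) huγ.le
      _ = L / c ^ γ * φ' (c * u) := by field_simp
  -- integral comparison
  have hcomp : (∫ u in (0:ℝ)..s, φ' u) ≤ ∫ u in (0:ℝ)..s, L / c ^ γ * φ' (c * u) := by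
    rw [intervalIntegral.integral_of_le hs.le, intervalIntegral.integral_of_le hs.le]
    exact MeasureTheory.setIntegral_mono_on hint1.1 hint3.1 measurableSet_Ioc hptwise
  -- compute RHS integral
  have hcalc : (∫ u in (0:ℝ)..s, L / c ^ γ * φ' (c * u)) = L / (c ^ γ * c) * φ t := by
    rw [intervalIntegral.integral_const_mul,
      intervalIntegral.integral_comp_mul_left φ' hc0.ne', mul_zero, hcs,
      hφ t ht.le]
    simp [smul_eq_mul]
    ring
  have hφs : φ s ≤ L / (c ^ γ * c) * φ t := by
    rw [hφ s hs.le]; rw [hcalc] at hcomp; exact hcomp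
  -- final arithmetic
  have hsγ : (0:ℝ) < s ^ (γ + 1) := Real.rpow_pos_of_pos hs (γ + 1)
  have htγ : t ^ (γ + 1) = c ^ γ * c * s ^ (γ + 1) := by
    rw [← hcs, Real.mul_rpow hc0.le hs.le, Real.rpow_add hc0, Real.rpow_one]
  rw [div_le_iff₀ hsγ, htγ]
  have hφt : 0 ≤ φ t := by
    rw [hφ t ht.le]
    apply intervalIntegral.integral_nonneg ht.le
    intro u hu; exact hnn u hu.1
  calc φ s ≤ L * φ t / (c ^ γ * c) := by
        rw [div_mul_eq_mul_div] at hφs; exact hφs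
    _ = L * (φ t / (c ^ γ * c * s ^ (γ + 1))) * s ^ (γ + 1) := by field_simp
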